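/- Let f : A → B be an injective homomorphism of finitely generated abelian groups. Then the monoid algebra ℤ[B] = AddMonoidAlgebra ℤ B, regarded as a module over ℤ[A] = AddMonoidAlgebra ℤ A via the ring homomorphism induced by f (mapping each basis element [a] to [f(a)]), is faithfully flat. -/

import Mathlib

section Aux
variable {A B : Type*} [AddCommGroup A] [AddCommGroup B] (f : A →+ B) (hf : Function.Injective f)

private lemma mk_add_f' (a : A) (b : B) :
    QuotientAddGroup.mk (s := f.range) (f a + b) = QuotientAddGroup.mk (s := f.range) b := by
  rw [QuotientAddGroup.mk_add,
    (QuotientAddGroup.eq_zero_iff _).mpr (AddMonoidHom.mem_range.mpr ⟨a, rfl⟩), zero_add]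

private noncomputable def coCompl (b : B) : A :=
  (AddMonoidHom.ofInjective hf).symm
    ⟨b - (QuotientAddGroup.mk (s := f.range) b).out, by
      refine (QuotientAddGroup.eq_zero_iff _).mp ?_
      rw [QuotientAddGroup.mk_sub, QuotientAddGroup.out_eq', sub_self]⟩

private lemma f_coCompl (b : B) :
    f (coCompl f hf b) = b - (QuotientAddGroup.mk (s := f.range) b).out :=
  AddMonoidHom.apply_ofInjective_symm hf _

private lemma coCompl_add_f (a : A) (b : B) :
    coCompl f hf (f a + b) = a + coCompl f hf b := by
  apply hf
  rw [map_add, f_coCompl, f_coCompl, mk_add_f' f a b]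
  abel

/-- `B ≃ (B ⧸ f.range) × A`. -/
private noncomputable def cosetEquiv : B ≃ (B ⧸ f.range) × A where
  toFun b := (QuotientAddGroup.mk b, coCompl f hf b)
  invFun p := p.1.out + f p.2
  left_inv b := by
    simp only [f_coCompl]
    abel
  right_inv p := by
    obtain ⟨q, a⟩ := p
    have h1 : QuotientAddGroup.mk (s := f.range) (q.out + f a) = q := by
      rw [add_comm, mk_add_f' f, QuotientAddGroup.out_eq']
    refine Prod.ext h1 ?_
    apply hf
    rw [f_coCompl, h1, add_sub_cancel_left]
private lemma prodLEquiv_single {α β : Type*} (x : α) (y : β) (m : ℤ) :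
    Finsupp.finsuppProdLEquiv ℤ (Finsupp.single (x, y) m) =
      Finsupp.single x (Finsupp.single y m) := by
  classical
  ext q a
  rw [Finsupp.finsuppProdLEquiv, Finsupp.curryLinearEquiv_apply]
  rcases eq_or_ne x q with h | h <;> rcases eq_or_ne y a with h2 | h2 <;>
    simp [Finsupp.single_apply, h, h2, Prod.ext_iff]
end Aux

theorem monoid_algebra_faithfully_flat_of_injective
    (A B : Type*) [AddCommGroup A] [AddCommGroup B]
    (hA : AddGroup.FG A) (hB : AddGroup.FG B)
    (f : A →+ B) (hf : Function.Injective f) :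
    letI : Algebra (AddMonoidAlgebra ℤ A) (AddMonoidAlgebra ℤ B) :=
      (AddMonoidAlgebra.mapDomainRingHom ℤ f).toAlgebra
    Module.FaithfullyFlat (AddMonoidAlgebra ℤ A) (AddMonoidAlgebra ℤ B) := by
  letI : Algebra (AddMonoidAlgebra ℤ A) (AddMonoidAlgebra ℤ B) :=
    (AddMonoidAlgebra.mapDomainRingHom ℤ f).toAlgebra
  set R := AddMonoidAlgebra ℤ A
  set Q := B ⧸ f.range
  let E : AddMonoidAlgebra ℤ B ≃ₗ[ℤ] (Q →₀ R) :=
    (AddMonoidAlgebra.coeffLinearEquiv ℤ).trans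
    ((Finsupp.domLCongr (cosetEquiv f hf) : (B →₀ ℤ) ≃ₗ[ℤ] ((Q × A) →₀ ℤ)).trans
      ((Finsupp.finsuppProdLEquiv ℤ).trans
        (Finsupp.mapRange.linearEquiv (AddMonoidAlgebra.coeffLinearEquiv ℤ).symm)))
  have hE_single : ∀ (b : B) (n : ℤ),
      E (AddMonoidAlgebra.single b n) =
        Finsupp.single (QuotientAddGroup.mk b) (AddMonoidAlgebra.single (coCompl f hf b) n) := by
    intro b n
    show Finsupp.mapRange.linearEquiv (AddMonoidAlgebra.coeffLinearEquiv ℤ).symm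
      ((Finsupp.finsuppProdLEquiv ℤ) (Finsupp.domLCongr (cosetEquiv f hf) (Finsupp.single b n))) = _
    rw [Finsupp.domLCongr_single]
    rw [show ((cosetEquiv f hf) b) = (QuotientAddGroup.mk (s := f.range) b, coCompl f hf b)
      from rfl]
    rw [prodLEquiv_single, Finsupp.mapRange.linearEquiv_apply, Finsupp.mapRange_single]
    rfl
  have hsmul : ∀ (r : R) (x : AddMonoidAlgebra ℤ B),
      r • x = AddMonoidAlgebra.mapDomainRingHom ℤ f r * x := by
    intro r x
    rw [Algebra.smul_def, RingHom.algebraMap_toAlgebra]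
  have key : ∀ (r : R) (x : AddMonoidAlgebra ℤ B), E (r • x) = r • E x := by
    intro r x
    induction r using AddMonoidAlgebra.induction_linear with
    | zero => rw [zero_smul, zero_smul, map_zero]
    | add g h hg hh => rw [add_smul, add_smul, map_add, hg, hh]
    | single a n =>
      induction x using AddMonoidAlgebra.induction_linear with
      | zero => rw [smul_zero, map_zero, smul_zero]
      | add u v hu hv => rw [smul_add, map_add, hu, hv, map_add, smul_add]
      | single b m =>
        rw [hsmul]
        rw [show (AddMonoidAlgebra.mapDomainRingHom ℤ f) (AddMonoidAlgebra.single a n) =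
          AddMonoidAlgebra.single (f a) n from AddMonoidAlgebra.mapDomain_single]
        rw [AddMonoidAlgebra.single_mul_single, hE_single, hE_single,
          mk_add_f' f, coCompl_add_f f hf, Finsupp.smul_single]
        congr 1
        rw [smul_eq_mul,
          AddMonoidAlgebra.single_mul_single]
  let Erlin : AddMonoidAlgebra ℤ B ≃ₗ[R] (Q →₀ R) :=
    { toFun := E, map_add' := map_add E, map_smul' := key,
      invFun := E.symm, left_inv := E.left_inv, right_inv := E.right_inv }
  have : Nonempty Q := ⟨0⟩
  exact Module.FaithfullyFlat.of_linearEquiv R (Q →₀ R) Erlin
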